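/- (Poisson summation / MacWilliams identity for symplectic orthogonal groups) Let V ≤ F₂^{2n} be a subspace with symplectic orthogonal V^⊥, and let B_w (resp. A_w) be the number of elements of V (resp. V^⊥) whose Pauli weight is w, where the Pauli weight of (u,v) ∈ F₂ⁿ×F₂ⁿ is the number of coordinates i with (uᵢ,vᵢ) ≠ (0,0). Then for all x,y: Σ_w B_w x^{n−w} y^w = (1/|V^⊥|) Σ_{w'} A_{w'} (x+3y)^{n−w'} (x−y)^{w'}. -/

import Mathlib

/-- Pauli vector space: pairs (u,v) of binary n-tuples labeling `X^u Z^v`. -/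
abbrev PV (n : ℕ) := (Fin n → ZMod 2) × (Fin n → ZMod 2)

/-- The symplectic inner product `(u₁,v₁)*(u₂,v₂) = u₁·v₂ + u₂·v₁ (mod 2)`. -/
def sympl {n : ℕ} (a b : PV n) : ZMod 2 :=
  (∑ i, a.1 i * b.2 i) + (∑ i, a.2 i * b.1 i)

lemma sympl_add_left {n : ℕ} (a b c : PV n) :
    sympl (a + b) c = sympl a c + sympl b c := by
  simp only [sympl, Prod.fst_add, Prod.snd_add, Pi.add_apply, add_mul]
  rw [Finset.sum_add_distrib, Finset.sum_add_distrib]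
  ring

lemma sympl_smul_left {n : ℕ} (r : ZMod 2) (a c : PV n) :
    sympl (r • a) c = r * sympl a c := by
  simp only [sympl, Prod.smul_fst, Prod.smul_snd, Pi.smul_apply, smul_eq_mul, mul_assoc]
  rw [← Finset.mul_sum, ← Finset.mul_sum, ← mul_add]

/-- Symplectic orthogonal complement of a subspace of `PV n`. -/
def sOrth {n : ℕ} (V : Submodule (ZMod 2) (PV n)) : Submodule (ZMod 2) (PV n) where
  carrier := {g | ∀ h ∈ V, sympl g h = 0}
  zero_mem' := by
    intro h _
    have : (0 : PV n) = (0 : ZMod 2) • (0 : PV n) := by simp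
    rw [this, sympl_smul_left, zero_mul]
  add_mem' := by
    intro a b ha hb x hx
    rw [sympl_add_left, ha x hx, hb x hx, add_zero]
  smul_mem' := by
    intro r a ha x hx
    rw [sympl_smul_left, ha x hx, mul_zero]

/-- Pauli weight of `(u,v)`: number of positions where `(uᵢ,vᵢ) ≠ (0,0)`. -/
def wt {n : ℕ} (a : PV n) : ℕ :=
  (Finset.univ.filter fun i => a.1 i ≠ 0 ∨ a.2 i ≠ 0).card

noncomputable def χ : ZMod 2 → ℝ := fun c => if c = 0 then 1 else -1

lemma zmod2_cases : ∀ a : ZMod 2, a = 0 ∨ a = 1 := by decide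

lemma χ_add (a b : ZMod 2) : χ (a + b) = χ a * χ b := by
  rcases zmod2_cases a with rfl | rfl <;> rcases zmod2_cases b with rfl | rfl <;>
    norm_num [χ] <;> decide

lemma local_sum (a b : ZMod 2) (X Y : ℝ) :
    ∑ p : ZMod 2 × ZMod 2, χ (a * p.2 + b * p.1) * (if p.1 = 0 ∧ p.2 = 0 then X else Y)
      = if a = 0 ∧ b = 0 then X + 3*Y else X - Y := by
  have hz : (Finset.univ : Finset (ZMod 2)) = {0, 1} := by decide
  have h01 : (0 : ZMod 2) ≠ 1 := by decide
  rcases zmod2_cases a with rfl | rfl <;> rcases zmod2_cases b with rfl | rfl <;>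
    simp [Fintype.sum_prod_type, hz, Finset.sum_pair h01, χ,
      (by decide : (1 + 1 : ZMod 2) = 0), (by decide : (1 : ZMod 2) ≠ 0)] <;> ring

lemma χ_sum {ι : Type*} (s : Finset ι) (f : ι → ZMod 2) :
    χ (∑ i ∈ s, f i) = ∏ i ∈ s, χ (f i) := by
  induction s using Finset.cons_induction with
  | empty => simp [χ]
  | cons a s ha ih => rw [Finset.sum_cons, Finset.prod_cons, χ_add, ih]

lemma sympl_eq_sum {n : ℕ} (a b : PV n) :
    sympl a b = ∑ i, (a.1 i * b.2 i + a.2 i * b.1 i) := by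
  rw [sympl, ← Finset.sum_add_distrib]

lemma sympl_symm {n : ℕ} (a b : PV n) : sympl a b = sympl b a := by
  unfold sympl
  rw [add_comm]
  congr 1 <;> exact Finset.sum_congr rfl fun i _ => mul_comm _ _

lemma wt_le {n : ℕ} (a : PV n) : wt a ≤ n := by
  simpa [wt] using Finset.card_filter_le Finset.univ (fun i => a.1 i ≠ 0 ∨ a.2 i ≠ 0)

lemma prod_if_eq_pow {n : ℕ} (g : PV n) (X Y : ℝ) :
    ∏ i, (if g.1 i = 0 ∧ g.2 i = 0 then X else Y) = X ^ (n - wt g) * Y ^ wt g := by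
  classical
  rw [Finset.prod_ite, Finset.prod_const, Finset.prod_const]
  have h1 : (Finset.univ.filter fun i => ¬(g.1 i = 0 ∧ g.2 i = 0)).card = wt g := by
    unfold wt
    congr 1
    apply Finset.filter_congr
    intro i _
    tauto
  have h2 : (Finset.univ.filter fun i => g.1 i = 0 ∧ g.2 i = 0).card = n - wt g := by
    have := Finset.card_filter_add_card_filter_not
      (s := (Finset.univ : Finset (Fin n))) (p := fun i => g.1 i = 0 ∧ g.2 i = 0)
    rw [h1] at this
    simp only [Finset.card_univ, Fintype.card_fin] at this
    omega
  rw [h1, h2]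

lemma transform {n : ℕ} (g : PV n) (X Y : ℝ) :
    ∑ h : PV n, χ (sympl g h) * ∏ i, (if h.1 i = 0 ∧ h.2 i = 0 then X else Y)
      = (X + 3*Y) ^ (n - wt g) * (X - Y) ^ wt g := by
  classical
  have step1 : ∀ h : PV n,
      χ (sympl g h) * ∏ i, (if h.1 i = 0 ∧ h.2 i = 0 then X else Y)
        = ∏ i, (χ (g.1 i * h.2 i + g.2 i * h.1 i) *
            (if h.1 i = 0 ∧ h.2 i = 0 then X else Y)) := by
    intro h
    rw [sympl_eq_sum, χ_sum, ← Finset.prod_mul_distrib]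
  simp only [step1]
  -- reindex over functions Fin n → ZMod 2 × ZMod 2
  rw [← Equiv.sum_comp (Equiv.arrowProdEquivProdArrow (Fin n) (fun _ => ZMod 2) (fun _ => ZMod 2))]
  simp only [Equiv.arrowProdEquivProdArrow, Equiv.coe_fn_mk]
  rw [← Fintype.piFinset_univ]
  refine (Finset.prod_univ_sum (fun _ : Fin n => (Finset.univ : Finset (ZMod 2 × ZMod 2)))
      (fun i p => χ (g.1 i * p.2 + g.2 i * p.1) * (if p.1 = 0 ∧ p.2 = 0 then X else Y))).symm.trans ?_
  have step3 : ∀ i : Fin n,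
      (∑ p : ZMod 2 × ZMod 2, χ (g.1 i * p.2 + g.2 i * p.1) *
        (if p.1 = 0 ∧ p.2 = 0 then X else Y))
      = if g.1 i = 0 ∧ g.2 i = 0 then X + 3*Y else X - Y := fun i => local_sum _ _ X Y
  simp only [step3]
  exact prod_if_eq_pow g _ _

open scoped Classical in
lemma char_sum_eq {n : ℕ} (W : Submodule (ZMod 2) (PV n)) (g : PV n) :
    ∑ h : W, χ (sympl g h) =
      if ∀ h ∈ W, sympl g h = 0 then (Nat.card W : ℝ) else 0 := by
  classical
  by_cases H : ∀ h ∈ W, sympl g h = 0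
  · rw [if_pos H]
    have : ∀ h : W, χ (sympl g h) = 1 := fun h => by
      rw [H h h.2]; simp [χ]
    rw [Finset.sum_congr rfl (fun h _ => this h), Finset.sum_const, Nat.card_eq_fintype_card]
    simp
  · rw [if_neg H]
    push_neg at H
    obtain ⟨h₀, h₀W, hne⟩ := H
    have h1 : sympl g h₀ = 1 := by
      rcases zmod2_cases (sympl g h₀) with h | h
      · exact absurd h hne
      · exact h
    have key : ∑ h : W, χ (sympl g h) = ∑ h : W, χ (sympl g ((⟨h₀, h₀W⟩ + h : W) : PV n)) := by
      exact (Equiv.sum_comp (Equiv.addLeft (⟨h₀, h₀W⟩ : W)) (fun h => χ (sympl g h))).symm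
    have neg : ∀ h : W, χ (sympl g ((⟨h₀, h₀W⟩ + h : W) : PV n)) = - χ (sympl g h) := by
      intro h
      have : sympl g ((⟨h₀, h₀W⟩ + h : W) : PV n) = sympl g h₀ + sympl g h := by
        rw [show ((⟨h₀, h₀W⟩ + h : W) : PV n) = h₀ + (h : PV n) from rfl,
          sympl_symm, sympl_add_left, sympl_symm (h : PV n) g, sympl_symm h₀ g]
      rw [this, χ_add, h1,
        show χ 1 = -1 from by norm_num [χ, (by decide : (1 : ZMod 2) ≠ 0)]]
      ring
    have key2 : ∑ h : W, χ (sympl g h) = - ∑ h : W, χ (sympl g h) := by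
      nth_rewrite 1 [key]
      rw [Finset.sum_congr rfl (fun h _ => neg h)]
      exact Finset.sum_neg_distrib (f := fun h : W => χ (sympl g (h : PV n)))
    linarith

open scoped Classical in
lemma sum_wt_group {n : ℕ} (W : Submodule (ZMod 2) (PV n)) (G : ℕ → ℝ) :
    ∑ g : W, G (wt (g : PV n)) =
      ∑ w ∈ Finset.range (n + 1),
        (Nat.card {g : PV n // g ∈ W ∧ wt g = w} : ℝ) * G w := by
  have hsub : ∑ g : W, G (wt (g : PV n))
      = ∑ g ∈ Finset.univ.filter (· ∈ W), G (wt g) := by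
    rw [Finset.sum_subtype (p := (· ∈ W)) (Finset.univ.filter (· ∈ W)) (by simp)
      (fun g => G (wt g))]
  rw [hsub, ← Finset.sum_fiberwise_of_maps_to
    (g := fun g : PV n => wt g) (fun g _ => Finset.mem_range.mpr (Nat.lt_succ_of_le (wt_le g)))]
  refine Finset.sum_congr rfl fun w _ => ?_
  have hconst : ∀ g ∈ (Finset.univ.filter (· ∈ W)).filter (fun g => wt g = w),
      G (wt g) = G w := by
    intro g hg
    rw [(Finset.mem_filter.mp hg).2]
  rw [Finset.sum_congr rfl hconst, Finset.sum_const, nsmul_eq_mul]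
  congr 2
  rw [Finset.filter_filter, Nat.card_eq_fintype_card, Fintype.card_subtype]

lemma mem_sOrth {n : ℕ} (V : Submodule (ZMod 2) (PV n)) (g : PV n) :
    g ∈ sOrth V ↔ ∀ h ∈ V, sympl g h = 0 := Iff.rfl

set_option maxHeartbeats 1000000 in
open scoped Classical in
lemma poisson {n : ℕ} (V : Submodule (ZMod 2) (PV n)) (x y : ℝ) :
    ∑ g : V, (x ^ (n - wt (g : PV n)) * y ^ wt (g : PV n))
      = ((Nat.card V : ℝ) / 4 ^ n) *
        ∑ h : sOrth V, ((x + 3*y) ^ (n - wt (h : PV n)) * (x - y) ^ wt (h : PV n)) := by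
  set X := (x + 3*y)/4 with hX
  set Y := (x - y)/4 with hY
  have hXY1 : X + 3*Y = x := by rw [hX, hY]; ring
  have hXY2 : X - Y = y := by rw [hX, hY]; ring
  have hf : ∀ g : PV n, x ^ (n - wt g) * y ^ wt g
      = ∑ h : PV n, χ (sympl g h) * ∏ i, (if h.1 i = 0 ∧ h.2 i = 0 then X else Y) := by
    intro g
    rw [transform, hXY1, hXY2]
  calc ∑ g : V, (x ^ (n - wt (g : PV n)) * y ^ wt (g : PV n))
      = ∑ g : V, ∑ h : PV n,
          χ (sympl (g : PV n) h) * ∏ i, (if h.1 i = 0 ∧ h.2 i = 0 then X else Y) := by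
        exact Finset.sum_congr rfl fun g _ => hf g
    _ = ∑ h : PV n, (∑ g : V, χ (sympl (h : PV n) (g : PV n))) *
          ∏ i, (if h.1 i = 0 ∧ h.2 i = 0 then X else Y) := by
        rw [Finset.sum_comm]
        refine Finset.sum_congr rfl fun h _ => ?_
        rw [Finset.sum_mul]
        exact Finset.sum_congr rfl fun g _ => by rw [sympl_symm]
    _ = ∑ h : PV n, (if h ∈ sOrth V then (Nat.card V : ℝ) else 0) *
          ∏ i, (if h.1 i = 0 ∧ h.2 i = 0 then X else Y) := by
        refine Finset.sum_congr rfl fun h _ => ?_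
        rw [char_sum_eq V h]
        exact congrArg (· * _) (if_congr (mem_sOrth V h).symm rfl rfl)
    _ = (Nat.card V : ℝ) * ∑ h : sOrth V,
          ∏ i, (if (h : PV n).1 i = 0 ∧ (h : PV n).2 i = 0 then X else Y) := by
        rw [Finset.mul_sum]
        rw [← Finset.sum_subtype (p := (· ∈ sOrth V)) (Finset.univ.filter (· ∈ sOrth V))
          (by simp) (fun h => (Nat.card V : ℝ) * ∏ i, (if h.1 i = 0 ∧ h.2 i = 0 then X else Y))]
        rw [Finset.sum_filter]
        refine Finset.sum_congr rfl fun h _ => ?_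
        split <;> simp
    _ = ((Nat.card V : ℝ) / 4 ^ n) *
        ∑ h : sOrth V, ((x + 3*y) ^ (n - wt (h : PV n)) * (x - y) ^ wt (h : PV n)) := by
        have hterm : ∀ h : sOrth V,
            (∏ i, (if (h : PV n).1 i = 0 ∧ (h : PV n).2 i = 0 then X else Y))
            = ((x + 3*y) ^ (n - wt (h : PV n)) * (x - y) ^ wt (h : PV n)) / 4 ^ n := by
          intro h
          rw [prod_if_eq_pow, hX, hY, div_pow, div_pow, div_mul_div_comm, ← pow_add,
            Nat.sub_add_cancel (wt_le _)]
        rw [Finset.sum_congr rfl fun h _ => hterm h, ← Finset.sum_div]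
        ring

noncomputable def sB {n : ℕ} : LinearMap.BilinForm (ZMod 2) (PV n) :=
  LinearMap.mk₂ (ZMod 2) sympl
    sympl_add_left sympl_smul_left
    (fun a b c => by rw [sympl_symm, sympl_add_left, sympl_symm b a, sympl_symm c a])
    (fun r a c => by rw [sympl_symm, sympl_smul_left, sympl_symm c a]; rw [smul_eq_mul])

lemma sB_apply {n : ℕ} (a b : PV n) : (sB a) b = sympl a b := rfl

lemma sB_refl {n : ℕ} : (sB (n := n)).IsRefl := by
  intro a b h
  rw [sB_apply] at h ⊢
  rw [sympl_symm]
  exact h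

lemma sB_nondegenerate {n : ℕ} : (sB (n := n)).Nondegenerate := by
  refine (LinearMap.IsRefl.nondegenerate_iff_separatingLeft sB_refl).mpr ?_
  intro m hm
  have h1 : ∀ i, m.1 i = 0 := by
    intro i
    have := hm (0, Pi.single i 1)
    simpa [sB_apply, sympl, Pi.single_apply, mul_ite, Finset.sum_ite_eq'] using this
  have h2 : ∀ i, m.2 i = 0 := by
    intro i
    have := hm (Pi.single i 1, 0)
    simpa [sB_apply, sympl, Pi.single_apply, mul_ite, Finset.sum_ite_eq'] using this
  ext i
  · exact h1 i
  · exact h2 i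

lemma sOrth_eq_orthogonal {n : ℕ} (V : Submodule (ZMod 2) (PV n)) :
    sOrth V = sB.orthogonal V := by
  ext g
  rw [mem_sOrth, LinearMap.BilinForm.mem_orthogonal_iff]
  constructor
  · intro h v hv
    rw [sB_apply, sympl_symm]
    exact h v hv
  · intro h v hv
    have := h v hv
    rwa [sB_apply, sympl_symm] at this

lemma finrank_PV {n : ℕ} : Module.finrank (ZMod 2) (PV n) = 2 * n := by
  rw [Module.finrank_prod, Module.finrank_pi]
  simp [two_mul]

lemma card_submodule {n : ℕ} (W : Submodule (ZMod 2) (PV n)) :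
    Nat.card W = 2 ^ Module.finrank (ZMod 2) W := by
  classical
  rw [Nat.card_eq_fintype_card, Module.card_eq_pow_finrank (K := ZMod 2) (V := W), ZMod.card]

lemma card_mul_card {n : ℕ} (V : Submodule (ZMod 2) (PV n)) :
    Nat.card V * Nat.card (sOrth V) = 4 ^ n := by
  rw [card_submodule, card_submodule, sOrth_eq_orthogonal,
    LinearMap.BilinForm.finrank_orthogonal sB_nondegenerate, finrank_PV]
  have hle : Module.finrank (ZMod 2) V ≤ 2 * n := by
    rw [← finrank_PV (n := n)]
    exact Submodule.finrank_le V
  rw [← pow_add]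
  have : Module.finrank (ZMod 2) V + (2 * n - Module.finrank (ZMod 2) V) = 2 * n := by omega
  rw [this, pow_mul]
  norm_num


/-- MacWilliams identity / Poisson summation for symplectic orthogonal groups:
`W_V(x,y) = |V^⊥|⁻¹ W_{V^⊥}(x+3y, x−y)`. -/
theorem macwilliams_identity {n : ℕ} (V : Submodule (ZMod 2) (PV n))
    (B A : ℕ → ℕ)
    (hB : ∀ w, B w = Nat.card {g : PV n // g ∈ V ∧ wt g = w})
    (hA : ∀ w', A w' = Nat.card {g : PV n // g ∈ sOrth V ∧ wt g = w'}) :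
    ∀ x y : ℝ,
      ∑ w ∈ Finset.range (n + 1), (B w : ℝ) * x ^ (n - w) * y ^ w =
      (1 / (Nat.card (sOrth V) : ℝ)) *
        ∑ w' ∈ Finset.range (n + 1),
          (A w' : ℝ) * (x + 3 * y) ^ (n - w') * (x - y) ^ w' := by
  classical
  intro x y
  have hL : ∑ w ∈ Finset.range (n + 1), (B w : ℝ) * x ^ (n - w) * y ^ w
      = ∑ g : V, (x ^ (n - wt (g : PV n)) * y ^ wt (g : PV n)) := by
    rw [sum_wt_group V (fun w => x ^ (n - w) * y ^ w)]
    refine Finset.sum_congr rfl fun w _ => ?_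
    rw [hB w, mul_assoc]
  have hR : ∑ w' ∈ Finset.range (n + 1),
        (A w' : ℝ) * (x + 3 * y) ^ (n - w') * (x - y) ^ w'
      = ∑ h : sOrth V, ((x + 3*y) ^ (n - wt (h : PV n)) * (x - y) ^ wt (h : PV n)) := by
    rw [sum_wt_group (sOrth V) (fun w => (x + 3*y) ^ (n - w) * (x - y) ^ w)]
    refine Finset.sum_congr rfl fun w _ => ?_
    rw [hA w, mul_assoc]
  rw [hL, hR, poisson V x y]
  congr 1
  have hc := card_mul_card V
  have h1 : (0 : ℕ) < Nat.card V := Nat.card_pos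
  have h2 : (0 : ℕ) < Nat.card (sOrth V) := Nat.card_pos
  have hcr : (Nat.card V : ℝ) * (Nat.card (sOrth V) : ℝ) = 4 ^ n := by
    exact_mod_cast congrArg (Nat.cast : ℕ → ℝ) hc
  rw [div_eq_div_iff (by positivity) (by exact_mod_cast h2.ne')]
  linarith [hcr]
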